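/- For u ∈ ℝ^N, sparsemax(u) (as defined with κ* from the top-k threshold) equals the Euclidean projection of u/(2N) onto the probability simplex Δ^N: sparsemax(u) = argmin_{p ∈ Δ^N} ‖p − u/(2N)‖₂². -/

import Mathlib

open Finset

/-- Threshold set for sparsemax: `j : Fin N` encodes support size `j+1`. -/
noncomputable def thresholdSet (N : ℕ) (w : Fin N → ℝ) (ρ : Equiv.Perm (Fin N)) : Finset (Fin N) :=
  Finset.univ.filter
    (fun j => (∑ i ∈ Finset.Iic j, w (ρ i)) < 2 * (N : ℝ) + ((j : ℝ) + 1) * w (ρ j))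

/-- `sparsemax(u)` (defined via the top-`k` threshold `κ*`) is the Euclidean projection of
`u/(2N)` onto the probability simplex: it lies in `Δ^N` and minimizes `‖p − u/(2N)‖₂²`. -/
theorem sparsemax_eq_projection (N : ℕ) (hN : 0 < N) (u : Fin N → ℝ)
    (ρ : Equiv.Perm (Fin N)) (hsort : Antitone (fun i => u (ρ i)))
    (hne : (thresholdSet N u ρ).Nonempty) :
    (fun i => max 0 (u i -
        ((∑ l ∈ Finset.Iic ((thresholdSet N u ρ).max' hne), u (ρ l)) - 2 * N) /
          (((thresholdSet N u ρ).max' hne : ℝ) + 1)) / (2 * N)) ∈ stdSimplex ℝ (Fin N) ∧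
    ∀ p ∈ stdSimplex ℝ (Fin N),
      (∑ i, ((max 0 (u i -
          ((∑ l ∈ Finset.Iic ((thresholdSet N u ρ).max' hne), u (ρ l)) - 2 * N) /
            (((thresholdSet N u ρ).max' hne : ℝ) + 1)) / (2 * N)) - u i / (2 * N)) ^ 2) ≤
        ∑ i, (p i - u i / (2 * N)) ^ 2 := by
  have hN' : (0:ℝ) < 2 * N := by positivity
  set k : Fin N := (thresholdSet N u ρ).max' hne with hk
  set S : Fin N → ℝ := fun j => ∑ l ∈ Finset.Iic j, u (ρ l) with hS
  set K : Fin N → ℝ := fun j => (S j - 2 * N) / ((j : ℝ) + 1) with hK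
  set κ : ℝ := K k with hκdef
  -- membership of k
  have hk_mem : k ∈ thresholdSet N u ρ := (thresholdSet N u ρ).max'_mem hne
  have hk_lt : S k < 2 * (N : ℝ) + ((k : ℝ) + 1) * u (ρ k) := by
    have := Finset.mem_filter.mp hk_mem
    exact this.2
  have hkpos : (0:ℝ) < (k : ℝ) + 1 := by positivity
  have hκ_lt : κ < u (ρ k) := by
    rw [hκdef, hK, div_lt_iff₀ hkpos]
    nlinarith
  -- the split of Iic
  have hsplit : ∀ (m : ℕ) (h : m + 1 < N),
      S ⟨m+1, h⟩ = u (ρ ⟨m+1, h⟩) + S ⟨m, Nat.lt_of_succ_lt h⟩ := by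
    intro m h
    have hins : Finset.Iic (⟨m+1, h⟩ : Fin N)
        = insert ⟨m+1, h⟩ (Finset.Iic ⟨m, Nat.lt_of_succ_lt h⟩) := by
      ext l
      simp only [Finset.mem_Iic, Finset.mem_insert, Fin.le_def, Fin.ext_iff]
      omega
    rw [hS]
    simp only
    rw [hins, Finset.sum_insert]
    simp only [Finset.mem_Iic, Fin.le_def]
    omega
  -- values beyond k are below κ
  have hmain : ∀ m : ℕ, k.val ≤ m → ∀ h : m < N,
      K ⟨m, h⟩ ≤ κ ∧ (k.val < m → u (ρ ⟨m, h⟩) ≤ κ) := by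
    intro m hm
    induction m, hm using Nat.le_induction with
    | base =>
      intro h
      constructor
      · simp [κ]
      · omega
    | succ m hm ih =>
      intro h
      have hm' : m < N := Nat.lt_of_succ_lt h
      obtain ⟨ihK, _⟩ := ih hm'
      set j : Fin N := ⟨m+1, h⟩ with hj
      set j' : Fin N := ⟨m, hm'⟩ with hj'
      have hjk : k < j := by
        rw [Fin.lt_def]; simp [hj]; omega
      have hj_notmem : j ∉ thresholdSet N u ρ := by
        intro hmem
        exact absurd ((thresholdSet N u ρ).le_max' j hmem) (not_le.mpr hjk)
      have hj_ge : 2 * (N : ℝ) + ((j : ℝ) + 1) * u (ρ j) ≤ S j := by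
        have := Finset.mem_filter.not.mp hj_notmem
        push_neg at this
        exact this (Finset.mem_univ j)
      have hSj : S j = u (ρ j) + S j' := hsplit m h
      have hjval : ((j : ℕ) : ℝ) = (m : ℝ) + 1 := by simp [hj]
      have hmpos : (0:ℝ) < (m : ℝ) + 1 := by positivity
      have hu_le : u (ρ j) ≤ K j' := by
        rw [hK, le_div_iff₀ hmpos]
        simp only [hj']
        rw [hSj, hjval] at hj_ge
        push_cast at hj_ge ⊢
        nlinarith
      have hKj' : K j' = (S j' - 2 * N) / ((m : ℝ) + 1) := by simp [hK, hj']
      have hu_leκ : u (ρ j) ≤ κ := le_trans hu_le ihK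
      have hSj' : S j' - 2 * N = ((m : ℝ) + 1) * K j' := by
        rw [hKj']; field_simp
      constructor
      · rw [hK, div_le_iff₀ (by push_cast [hjval]; positivity)]
        rw [hSj, hjval]
        have h1 : ((m:ℝ)+1) * K j' ≤ ((m:ℝ)+1) * κ :=
          mul_le_mul_of_nonneg_left ihK (by positivity)
        nlinarith
      · intro _
        exact hu_leκ
  have h_below : ∀ j : Fin N, k < j → u (ρ j) ≤ κ := by
    intro j hj
    have := (hmain j.val (le_of_lt hj) j.isLt).2 hj
    simpa using this
  have h_above : ∀ j : Fin N, j ≤ k → κ ≤ u (ρ j) := by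
    intro j hj
    exact le_trans (le_of_lt hκ_lt) (hsort hj)
  -- key sum identity
  have hsum : ∑ i, max 0 (u i - κ) = 2 * N := by
    have hperm : ∑ i, max 0 (u i - κ) = ∑ j, max 0 (u (ρ j) - κ) :=
      (Equiv.sum_comp ρ fun i => max 0 (u i - κ)).symm
    rw [hperm, ← Finset.sum_add_sum_compl (Finset.Iic k)]
    have h1 : ∑ j ∈ Finset.Iic k, max 0 (u (ρ j) - κ)
        = ∑ j ∈ Finset.Iic k, (u (ρ j) - κ) := by
      apply Finset.sum_congr rfl
      intro j hj
      exact max_eq_right (by linarith [h_above j (Finset.mem_Iic.mp hj)])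
    have h2 : ∑ j ∈ (Finset.Iic k)ᶜ, max 0 (u (ρ j) - κ) = 0 := by
      apply Finset.sum_eq_zero
      intro j hj
      have : k < j := not_le.mp (Finset.mem_Iic.not.mp (Finset.mem_compl.mp hj))
      exact max_eq_left (by linarith [h_below j this])
    rw [h1, h2, add_zero, Finset.sum_sub_distrib, Finset.sum_const, Fin.card_Iic, nsmul_eq_mul]
    have hSk : ∑ j ∈ Finset.Iic k, u (ρ j) = S k := rfl
    have : ((k:ℝ) + 1) * κ = S k - 2 * N := by
      rw [hκdef, hK]; field_simp
    rw [hSk]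
    push_cast
    linarith
  -- the candidate
  set s : Fin N → ℝ := fun i => max 0 (u i - κ) / (2 * N) with hs
  have hs_nonneg : ∀ i, 0 ≤ s i := fun i => by positivity
  have hs_sum : ∑ i, s i = 1 := by
    rw [hs]
    simp only
    rw [← Finset.sum_div, hsum, div_self (ne_of_gt hN')]
  set v : Fin N → ℝ := fun i => u i / (2 * N) with hv
  set τ : ℝ := κ / (2 * N) with hτ
  have hsvτ : ∀ i, s i - v i = max 0 (u i - κ) / (2*N) - u i / (2*N) := fun i => rfl
  have hkey1 : ∀ i, s i * (s i - v i) = -τ * s i := by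
    intro i
    rcases le_or_gt (u i - κ) 0 with h | h
    · have : s i = 0 := by simp [hs, max_eq_left h]
      rw [this]; ring
    · have hmax : max 0 (u i - κ) = u i - κ := max_eq_right (le_of_lt h)
      have : s i - v i = -τ := by
        rw [hsvτ, hmax, hτ]; ring
      rw [this]; ring
  have hkey2 : ∀ i, -τ ≤ s i - v i := by
    intro i
    rcases le_or_gt (u i - κ) 0 with h | h
    · have hmax : max 0 (u i - κ) = 0 := max_eq_left h
      have huκ : u i ≤ κ := by linarith
      rw [hsvτ, hmax, hτ, zero_div, zero_sub, neg_le_neg_iff]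
      gcongr
    · have hmax : max 0 (u i - κ) = u i - κ := max_eq_right (le_of_lt h)
      rw [hsvτ, hmax, hτ]
      apply le_of_eq; ring
  constructor
  · exact ⟨hs_nonneg, hs_sum⟩
  · intro p hp
    obtain ⟨hp_nonneg, hp_sum⟩ := hp
    have hcross : 0 ≤ ∑ i, (p i - s i) * (s i - v i) := by
      have e1 : ∑ i, (p i - s i) * (s i - v i)
          = ∑ i, p i * (s i - v i) - ∑ i, s i * (s i - v i) := by
        rw [← Finset.sum_sub_distrib]
        apply Finset.sum_congr rfl
        intro i _
        ring
      have e2 : ∑ i, s i * (s i - v i) = -τ := by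
        rw [Finset.sum_congr rfl (fun i _ => hkey1 i), ← Finset.mul_sum, hs_sum, mul_one]
      have e3 : -τ ≤ ∑ i, p i * (s i - v i) := by
        calc -τ = ∑ i, p i * (-τ) := by
              rw [← Finset.sum_mul, hp_sum, one_mul]
          _ ≤ ∑ i, p i * (s i - v i) :=
              Finset.sum_le_sum fun i _ =>
                mul_le_mul_of_nonneg_left (hkey2 i) (hp_nonneg i)
      rw [e1, e2]
      linarith
    have hexp : ∑ i, (p i - v i) ^ 2
        = ∑ i, (s i - v i) ^ 2 + ∑ i, (p i - s i) ^ 2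
          + 2 * ∑ i, (p i - s i) * (s i - v i) := by
      rw [Finset.mul_sum, ← Finset.sum_add_distrib, ← Finset.sum_add_distrib]
      apply Finset.sum_congr rfl
      intro i _
      ring
    have hsq : 0 ≤ ∑ i, (p i - s i) ^ 2 :=
      Finset.sum_nonneg fun i _ => sq_nonneg _
    have : ∑ i, (s i - v i) ^ 2 ≤ ∑ i, (p i - v i) ^ 2 := by
      rw [hexp]; linarith
    exact this
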